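/- Let p be a prime with p ∉ {2, 3, 5}, and let i ∈ {0, 1, …, π(p)−1} be a Lucas zero with respect to p (i.e., L(i) ≡ 0 (mod p)). Then ν_p(L(i)) = ν_p(F(p−ε)). -/

import Mathlib

/-- The Lucas sequence: `L 0 = 2`, `L 1 = 1`, `L (n+2) = L (n+1) + L n`. -/
def lucas : ℕ → ℕ
  | 0 => 2
  | 1 => 1
  | n + 2 => lucas (n + 1) + lucas n

/-- The Pisano period of the Fibonacci sequence modulo `p`: the least `m ≥ 1`
with `F (n + m) ≡ F n (mod p)` for all `n`. -/
noncomputable def pisano (p : ℕ) : ℕ :=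
  sInf {m | 1 ≤ m ∧ ∀ n, Nat.fib (n + m) ≡ Nat.fib n [MOD p]}

/-- The natural number `p - ε` for `p ∉ {2, 5}`. -/
def pSubEps (p : ℕ) : ℕ := if p % 5 = 1 ∨ p % 5 = 4 then p - 1 else p + 1

open Nat Polynomial


-- basic lucas facts
lemma lucas_add_fib (n : ℕ) : lucas n + Nat.fib n = 2 * Nat.fib (n + 1) := by
  induction n using Nat.twoStepInduction with
  | zero => simp [lucas]
  | one => simp [lucas]
  | more n ih1 ih2 =>
    have h1 : Nat.fib (n+2) = Nat.fib n + Nat.fib (n+1) := Nat.fib_add_two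
    have h2 : Nat.fib (n+1+2) = Nat.fib (n+1) + Nat.fib (n+1+1) := Nat.fib_add_two
    simp only [lucas]
    simp only [show n+1+1=n+2 from rfl, show n+1+2=n+3 from rfl, show n+2+1=n+3 from rfl] at *
    omega

lemma lucas_eq (n : ℕ) : lucas n = 2 * Nat.fib (n + 1) - Nat.fib n := by
  have := lucas_add_fib n; omega

lemma fib_mul_lucas (n : ℕ) : Nat.fib n * lucas n = Nat.fib (2 * n) := by
  rw [Nat.fib_two_mul, lucas_eq]

lemma lucas_pos (n : ℕ) : 0 < lucas n := by
  have h := lucas_add_fib n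
  have h2 := Nat.fib_le_fib_succ (n := n)
  have h3 : 0 < Nat.fib (n+1) := Nat.fib_pos.mpr (Nat.succ_pos n)
  omega

-- Binet-style lemma in a commutative ring
lemma binet {R : Type*} [CommRing R] (x : R) (hx : x ^ 2 = x + 1) :
    ∀ n : ℕ, x ^ (n + 1) = (Nat.fib (n + 1) : R) * x + (Nat.fib n : R) := by
  intro n
  induction n with
  | zero => simp
  | succ n ih =>
    have : x ^ (n + 2) = x ^ (n+1) * x := by ring
    rw [this, ih]
    have hf : (Nat.fib (n+2) : R) = (Nat.fib (n+1) : R) + (Nat.fib n : R) := by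
      rw [Nat.fib_add_two]; push_cast; ring
    rw [hf]
    have : ((Nat.fib (n + 1) : R) * x + (Nat.fib n : R)) * x
        = (Nat.fib (n+1) : R) * x ^ 2 + (Nat.fib n : R) * x := by ring
    rw [this, hx]; ring

-- Cassini identity over ℤ
lemma cassini (n : ℕ) :
    (Nat.fib (n+1) : ℤ) ^ 2 = (Nat.fib (n+2) : ℤ) * (Nat.fib n : ℤ) + (-1) ^ n := by
  induction n with
  | zero => simp
  | succ n ih =>
    have h3 : (Nat.fib (n+3) : ℤ) = (Nat.fib (n+2) : ℤ) + (Nat.fib (n+1) : ℤ) := by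
      have h : Nat.fib (n+1+2) = Nat.fib (n+1) + Nat.fib (n+1+1) := Nat.fib_add_two
      simp only [show n+1+1=n+2 from rfl, show n+1+2=n+3 from rfl] at h
      push_cast at h ⊢; omega
    have h2 : (Nat.fib (n+2) : ℤ) = (Nat.fib (n+1) : ℤ) + (Nat.fib n : ℤ) := by
      have : Nat.fib (n+2) = Nat.fib n + Nat.fib (n+1) := Nat.fib_add_two
      push_cast at this ⊢; omega
    linear_combination -ih - (Nat.fib (n+1):ℤ) * h3 + (Nat.fib (n+2):ℤ) * h2

lemma aux5 (n : ℕ) (hn : n < 5) : IsSquare ((n : ℕ) : ZMod 5) ↔ (n = 0 ∨ n = 1 ∨ n = 4) := by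
  interval_cases n <;> decide

lemma isSquare_five_iff (p : ℕ) (hp : p.Prime) (hp2 : p ≠ 2) (hp5 : p ≠ 5) :
    IsSquare (5 : ZMod p) ↔ (p % 5 = 1 ∨ p % 5 = 4) := by
  haveI : Fact p.Prime := ⟨hp⟩
  haveI : Fact (Nat.Prime 5) := ⟨by norm_num⟩
  have key : IsSquare ((5 : ℕ) : ZMod p) ↔ IsSquare ((p : ℕ) : ZMod 5) :=
    (ZMod.exists_sq_eq_prime_iff_of_mod_four_eq_one (p := 5) (q := p) (by norm_num) hp2).symm
  have hcast : ((5 : ℕ) : ZMod p) = (5 : ZMod p) := by push_cast; ring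
  rw [hcast] at key
  have hmod : ((p : ℕ) : ZMod 5) = ((p % 5 : ℕ) : ZMod 5) := (ZMod.natCast_mod p 5).symm
  rw [key, hmod]
  have hlt : p % 5 < 5 := Nat.mod_lt _ (by norm_num)
  have h0 : p % 5 ≠ 0 := by
    intro h
    have h' : (5:ℕ) ∣ p := Nat.dvd_of_mod_eq_zero h
    exact hp5 ((Nat.prime_dvd_prime_iff_eq (by norm_num) hp).mp h').symm
  rw [aux5 _ hlt]
  omega

lemma five_ne_zero (p : ℕ) (hp : p.Prime) (hp5 : p ≠ 5) : (5 : ZMod p) ≠ 0 := by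
  intro h
  have h' : p ∣ 5 := (ZMod.natCast_eq_zero_iff 5 p).mp (by exact_mod_cast h)
  rcases (Nat.Prime.eq_one_or_self_of_dvd (by norm_num) p h') with h'' | h''
  · exact hp.one_lt.ne' h''
  · exact hp5 h''

lemma zmodTwoNeZero (p : ℕ) (hp : p.Prime) (hp2 : p ≠ 2) : (2 : ZMod p) ≠ 0 := by
  intro h
  have h' : p ∣ 2 := (ZMod.natCast_eq_zero_iff 2 p).mp (by exact_mod_cast h)
  rcases (Nat.Prime.eq_one_or_self_of_dvd (by norm_num) p h') with h'' | h''
  · exact hp.one_lt.ne' h''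
  · exact hp2 h''

lemma apparition_one (p : ℕ) (hp : p.Prime) (hp2 : p ≠ 2) (hp5 : p ≠ 5)
    (hsq : IsSquare (5 : ZMod p)) : p ∣ Nat.fib (p - 1) := by
  haveI : Fact p.Prime := ⟨hp⟩
  obtain ⟨r, hr⟩ := hsq
  have h2 : (2 : ZMod p) ≠ 0 := zmodTwoNeZero p hp hp2
  set x : ZMod p := (1 + r) * (2 : ZMod p)⁻¹ with hxdef
  have h2x : 2 * x = 1 + r := by rw [hxdef]; field_simp
  have h4 : (4 : ZMod p) ≠ 0 := by
    intro h; apply h2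
    have h22 : (2:ZMod p) * 2 = 0 := by rw [show (2:ZMod p)*2 = 4 by norm_num, h]
    rcases mul_eq_zero.mp h22 with h' | h' <;> exact h'
  have hx : x ^ 2 = x + 1 := by
    have key : (4 : ZMod p) * x ^ 2 = 4 * (x + 1) := by
      linear_combination (2*x + r - 1) * h2x - hr
    have := mul_left_cancel₀ h4 key
    exact this
  set y : ZMod p := 1 - x with hydef
  have hy : y ^ 2 = y + 1 := by rw [hydef]; linear_combination hx
  have hx0 : x ≠ 0 := by intro h; rw [h] at hx; simp at hx
  have hy0 : y ≠ 0 := by intro h; rw [h] at hy; simp at hy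
  have hxp : x ^ (p - 1) = 1 := ZMod.pow_card_sub_one_eq_one hx0
  have hyp : y ^ (p - 1) = 1 := ZMod.pow_card_sub_one_eq_one hy0
  have hp1 : p - 1 = (p - 2) + 1 := by have := hp.two_le; omega
  have bx := binet x hx (p - 2)
  have by' := binet y hy (p - 2)
  have hxy : x ^ (p-1) = y ^ (p-1) := by rw [hxp, hyp]
  rw [hp1] at hxy
  rw [bx, by'] at hxy
  rw [← hp1] at hxy
  have hsub : (Nat.fib (p-1) : ZMod p) * (x - y) = 0 := by linear_combination hxy
  have hxyne : x - y ≠ 0 := by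
    intro h
    have hd : x - y = 2 * x - 1 := by rw [hydef]; ring
    rw [hd, h2x] at h
    have hr0 : r = 0 := by linear_combination h
    rw [hr0, mul_zero] at hr
    exact five_ne_zero p hp hp5 hr
  have hfz : (Nat.fib (p-1) : ZMod p) = 0 := by
    rcases mul_eq_zero.mp hsub with h | h
    · exact h
    · exact absurd h hxyne
  exact (ZMod.natCast_eq_zero_iff _ p).mp hfz

lemma apparition_two (p : ℕ) (hp : p.Prime) (hp2 : p ≠ 2) (hp5 : p ≠ 5)
    (hsq : ¬ IsSquare (5 : ZMod p)) : p ∣ Nat.fib (p + 1) := by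
  haveI : Fact p.Prime := ⟨hp⟩
  set f : (ZMod p)[X] := X ^ 2 - X - C 1 with hfdef
  have hmonic : f.Monic := by unfold f; monicity!
  have hdeg : f.natDegree = 2 := by unfold f; compute_degree!
  have hnoroot : ∀ a : ZMod p, ¬ f.IsRoot a := by
    intro a ha
    have ha' : a ^ 2 - a - 1 = 0 := by
      simp only [hfdef, IsRoot, eval_sub, eval_pow, eval_X, eval_C] at ha
      linear_combination ha
    exact hsq ⟨2 * a - 1, by linear_combination -4 * ha'⟩
  have hroots : f.roots = 0 := by
    apply Multiset.eq_zero_of_forall_notMem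
    intro a ha
    exact hnoroot a ((mem_roots hmonic.ne_zero).mp ha)
  have hirr : Irreducible f :=
    (hmonic.irreducible_iff_roots_eq_zero_of_degree_le_three (by omega) (by omega)).mpr hroots
  haveI : Fact (Irreducible f) := ⟨hirr⟩
  let K := AdjoinRoot f
  haveI : CharP K p := charP_of_injective_algebraMap (algebraMap (ZMod p) K).injective p
  have hinj := (algebraMap (ZMod p) K).injective
  set ph : K := AdjoinRoot.root f with hphidef
  have hphi : ph ^ 2 = ph + 1 := by
    have h := AdjoinRoot.isRoot_root f
    simp only [hfdef, IsRoot, Polynomial.map_sub, Polynomial.map_pow, Polynomial.map_X,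
      Polynomial.map_one, Polynomial.map_C, eval_sub, eval_pow, eval_X, eval_C, eval_one,
      map_one] at h
    linear_combination h
  set ps : K := 1 - ph with hpsidef
  have hpsi : ps ^ 2 = ps + 1 := by rw [hpsidef]; linear_combination hphi
  have hmul : ph * ps = -1 := by rw [hpsidef]; linear_combination -hphi
  have hfive : (5 : K) ≠ 0 := by
    intro h
    apply five_ne_zero p hp hp5
    have h5 : algebraMap (ZMod p) K (5 : ZMod p) = 0 := by rw [map_ofNat]; exact_mod_cast h
    exact (map_eq_zero_iff _ hinj).mp h5
  have hdiffsq : (ph - ps) ^ 2 = 5 := by rw [hpsidef]; linear_combination 4 * hphi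
  have hdiff : ph - ps ≠ 0 := by
    intro h
    apply hfive
    rw [← hdiffsq, h]; ring
  have hfrob : (ph ^ p) ^ 2 = ph ^ p + 1 := by
    have h1 : (ph ^ 2) ^ p = (ph + 1) ^ p := by rw [hphi]
    have h2 : (ph + 1) ^ p = ph ^ p + 1 ^ p := add_pow_char ph 1 p
    calc (ph ^ p) ^ 2 = (ph ^ 2) ^ p := by rw [← pow_mul, ← pow_mul, Nat.mul_comm]
    _ = ph ^ p + 1 := by rw [h1, h2, one_pow]
  have hcases : ph ^ p = ph ∨ ph ^ p = ps := by
    have hz : (ph ^ p - ph) * (ph ^ p - ps) = 0 := by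
      rw [hpsidef]; linear_combination hfrob - hphi
    rcases mul_eq_zero.mp hz with h | h
    · left; exact sub_eq_zero.mp h
    · right; exact sub_eq_zero.mp h
  rcases hcases with hfix | hswap
  · -- contradiction by counting roots of X^p - X
    exfalso
    have hgne : (X ^ p - X : K[X]) ≠ 0 := FiniteField.X_pow_card_sub_X_ne_zero K hp.one_lt
    have hgdeg : (X ^ p - X : K[X]).natDegree = p :=
      FiniteField.X_pow_card_sub_X_natDegree_eq K hp.one_lt
    set S : Finset K := Finset.univ.image (algebraMap (ZMod p) K) with hSdef
    have hcardS : S.card = p := by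
      rw [hSdef, Finset.card_image_of_injective _ hinj, Finset.card_univ, ZMod.card]
    have hphiS : ph ∉ S := by
      intro hmem
      obtain ⟨a, -, ha⟩ := Finset.mem_image.mp hmem
      apply hnoroot a
      have key : algebraMap (ZMod p) K (a ^ 2 - a - 1) = 0 := by
        rw [map_sub, map_sub, map_pow, map_one, ha]
        linear_combination hphi
      have : a ^ 2 - a - 1 = 0 := (map_eq_zero_iff _ hinj).mp key
      simp only [hfdef, IsRoot, eval_sub, eval_pow, eval_X, eval_C]
      linear_combination this
    have hsubset : (insert ph S).val ≤ (X ^ p - X : K[X]).roots := by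
      rw [Multiset.le_iff_subset (insert ph S).nodup]
      intro z hz
      rw [mem_roots hgne]
      simp only [IsRoot, eval_sub, eval_pow, eval_X]
      rw [Finset.mem_val, Finset.mem_insert] at hz
      rcases hz with rfl | hz
      · rw [hfix]; ring
      · obtain ⟨a, -, ha⟩ := Finset.mem_image.mp hz
        rw [← ha, ← map_pow, ZMod.pow_card, sub_self]
    have hcount := Multiset.card_le_card hsubset
    have hc1 : Multiset.card (insert ph S).val = S.card + 1 := by
      rw [← Finset.card_def, Finset.card_insert_of_notMem hphiS]
    have hle := (X ^ p - X : K[X]).card_roots'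
    rw [hgdeg] at hle
    omega
  · -- main case: ph^p = ps
    have hpsip : ps ^ p = ph := by
      have hsp : (1 - ph : K) ^ p = 1 ^ p - ph ^ p := sub_pow_char_of_commute p (Commute.all 1 ph)
      rw [hpsidef, hsp, one_pow, hswap, hpsidef]
      ring
    have hph1 : ph ^ (p + 1) = -1 := by
      rw [pow_succ, hswap, mul_comm]; exact hmul
    have hps1 : ps ^ (p + 1) = -1 := by
      rw [pow_succ, hpsip]; exact hmul
    have bx := binet ph hphi p
    have by' := binet ps hpsi p
    rw [hph1] at bx
    rw [hps1] at by'
    have hzero : (Nat.fib (p+1) : K) * (ph - ps) = 0 := by linear_combination -bx + by'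
    have hK : (Nat.fib (p+1) : K) = 0 := by
      rcases mul_eq_zero.mp hzero with h | h
      · exact h
      · exact absurd h hdiff
    have hZ : ((Nat.fib (p+1) : ZMod p)) = 0 := by
      apply hinj
      rw [map_natCast (algebraMap (ZMod p) K), map_zero]
      exact hK
    exact (ZMod.natCast_eq_zero_iff _ p).mp hZ

noncomputable def fibRank (p : ℕ) : ℕ := sInf {n | 0 < n ∧ p ∣ Nat.fib n}

lemma fibRank_mem (p : ℕ) (hne : {n | 0 < n ∧ p ∣ Nat.fib n}.Nonempty) :
    0 < fibRank p ∧ p ∣ Nat.fib (fibRank p) := Nat.sInf_mem hne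

lemma fibRank_dvd (p : ℕ) (hne : {n | 0 < n ∧ p ∣ Nat.fib n}.Nonempty)
    (n : ℕ) (h : p ∣ Nat.fib n) : fibRank p ∣ n := by
  obtain ⟨hpos, hdvd⟩ := fibRank_mem p hne
  rcases Nat.eq_zero_or_pos n with rfl | hn
  · exact Dvd.intro 0 rfl
  · set g := Nat.gcd (fibRank p) n with hg
    have hgdvd : p ∣ Nat.fib g := by
      rw [hg, Nat.fib_gcd]
      exact Nat.dvd_gcd hdvd h
    have hgpos : 0 < g := Nat.gcd_pos_of_pos_right _ hn
    have hle : fibRank p ≤ g := Nat.sInf_le ⟨hgpos, hgdvd⟩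
    have hdl : g ∣ fibRank p := Nat.gcd_dvd_left _ _
    have : g = fibRank p := le_antisymm (Nat.le_of_dvd hpos hdl) hle
    rw [← this]
    exact Nat.gcd_dvd_right _ _

lemma dvd_fib_of_fibRank_dvd (p : ℕ) (hne : {n | 0 < n ∧ p ∣ Nat.fib n}.Nonempty)
    (n : ℕ) (h : fibRank p ∣ n) : p ∣ Nat.fib n :=
  dvd_trans (fibRank_mem p hne).2 (Nat.fib_dvd _ _ h)

-- lifting-the-exponent style lemma
lemma fib_val (p : ℕ) (hp : p.Prime) (α : ℕ) (hα : 0 < α) (hdvd : p ∣ Nat.fib α)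
    (hB : ¬ p ∣ Nat.fib (α+1)) (k : ℕ) (hk0 : 0 < k) (hk : ¬ p ∣ k) :
    padicValNat p (Nat.fib (α * k)) = padicValNat p (Nat.fib α) := by
  haveI : Fact p.Prime := ⟨hp⟩
  set e := padicValNat p (Nat.fib α) with hedef
  have hfibα : Nat.fib α ≠ 0 := (Nat.fib_pos.mpr hα).ne'
  have he1 : 1 ≤ e := one_le_padicValNat_of_dvd (Nat.fib_pos.mpr hα).ne' hdvd
  haveI : NeZero (p ^ (e+1)) := ⟨pow_ne_zero _ hp.ne_zero⟩
  have hpe : p ^ e ∣ Nat.fib α := pow_padicValNat_dvd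
  have hA2 : ((Nat.fib α : ZMod (p^(e+1))) * (Nat.fib α : ZMod (p^(e+1)))) = 0 := by
    rw [← Nat.cast_mul, ZMod.natCast_eq_zero_iff]
    calc p^(e+1) ∣ p^e * p^e := by
          rw [← pow_add]; exact pow_dvd_pow p (by omega)
    _ ∣ Nat.fib α * Nat.fib α := mul_dvd_mul hpe hpe
  have hAm1 : ((Nat.fib (α-1) : ZMod (p^(e+1)))) =
      (Nat.fib (α+1) : ZMod (p^(e+1))) - (Nat.fib α : ZMod (p^(e+1))) := by
    have h := Nat.fib_add_two (n := α - 1)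
    rw [show α - 1 + 2 = α + 1 by omega, show α - 1 + 1 = α by omega] at h
    rw [h]
    push_cast
    ring
  have key : ∀ j : ℕ, ((Nat.fib (α*(j+1)) : ZMod (p^(e+1)))
        = ((j:ZMod (p^(e+1))) + 1) * (Nat.fib α : ZMod (p^(e+1))) * (Nat.fib (α+1) : ZMod (p^(e+1)))^j)
      ∧ ((Nat.fib (α*(j+1)+1) : ZMod (p^(e+1))) = (Nat.fib (α+1) : ZMod (p^(e+1)))^(j+1)) := by
    intro j
    induction j with
    | zero => simp
    | succ j ih =>
      obtain ⟨ih1, ih2⟩ := ih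
      have hms : α*(j+1+1) = α*(j+1) + α := by ring
      have e1 : α*(j+1+1) = α*(j+1) + (α-1) + 1 := by omega
      have e2 : α*(j+1+1)+1 = α*(j+1) + α + 1 := by omega
      constructor
      · rw [e1, Nat.fib_add, show α - 1 + 1 = α by omega]
        push_cast
        rw [ih1, ih2, hAm1]
        push_cast
        linear_combination (-(((j:ZMod (p^(e+1))) + 1)) * (Nat.fib (α+1) : ZMod (p^(e+1)))^j) * hA2
      · rw [e2, Nat.fib_add]
        push_cast
        rw [ih1, ih2]
        linear_combination (((j:ZMod (p^(e+1))) + 1) * (Nat.fib (α+1) : ZMod (p^(e+1)))^j) * hA2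
  -- now conclude
  have hkpos : (0:ℕ) < α * k := Nat.mul_pos hα hk0
  have hfibne : Nat.fib (α * k) ≠ 0 := (Nat.fib_pos.mpr hkpos).ne'
  have hdvd1 : p ^ e ∣ Nat.fib (α * k) :=
    dvd_trans hpe (Nat.fib_dvd _ _ ⟨k, rfl⟩)
  have hnot : ¬ p ^ (e+1) ∣ Nat.fib (α * k) := by
    intro hdd
    have hzero : ((Nat.fib (α * k) : ZMod (p^(e+1)))) = 0 :=
      (ZMod.natCast_eq_zero_iff _ _).mpr hdd
    obtain ⟨j, rfl⟩ : ∃ j, k = j + 1 := ⟨k - 1, by omega⟩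
    have hk1 := (key j).1
    rw [hzero] at hk1
    have hBunit : IsUnit ((Nat.fib (α+1) : ZMod (p^(e+1)))) := by
      rw [ZMod.isUnit_iff_coprime]
      exact Nat.Coprime.pow_right _ ((Nat.coprime_comm).mp (hp.coprime_iff_not_dvd.mpr hB))
    have hkunit : IsUnit ((j:ZMod (p^(e+1))) + 1) := by
      have : ((j:ZMod (p^(e+1))) + 1) = ((j+1 : ℕ) : ZMod (p^(e+1))) := by push_cast; ring
      rw [this, ZMod.isUnit_iff_coprime]
      exact Nat.Coprime.pow_right _ ((Nat.coprime_comm).mp (hp.coprime_iff_not_dvd.mpr hk))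
    have hu : IsUnit (((j:ZMod (p^(e+1))) + 1) * (Nat.fib (α+1) : ZMod (p^(e+1)))^j) :=
      hkunit.mul (hBunit.pow j)
    have hAzero : ((Nat.fib α : ZMod (p^(e+1)))) = 0 := by
      have h0 : (((j:ZMod (p^(e+1))) + 1) * (Nat.fib (α+1) : ZMod (p^(e+1)))^j)
          * (Nat.fib α : ZMod (p^(e+1))) = 0 := by
        linear_combination -hk1
      exact (hu.mul_right_eq_zero).mp h0
    have : p ^ (e+1) ∣ Nat.fib α := (ZMod.natCast_eq_zero_iff _ _).mp hAzero
    exact pow_succ_padicValNat_not_dvd hfibα this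
  have hle1 : e ≤ padicValNat p (Nat.fib (α * k)) := (padicValNat_dvd_iff_le hfibne).mp hdvd1
  have hle2 : padicValNat p (Nat.fib (α * k)) ≤ e := by
    by_contra hcon
    exact hnot ((padicValNat_dvd_iff_le hfibne).mpr (by omega))
  omega

lemma pisano_le_aux (p α : ℕ) (hα : 0 < α) (heven : α % 2 = 0) (hdvd : p ∣ Nat.fib α) :
    (sInf {m | 1 ≤ m ∧ ∀ n, Nat.fib (n + m) ≡ Nat.fib n [MOD p]}) ≤ 2 * α := by
  have hA : (Nat.fib α : ZMod p) = 0 := (ZMod.natCast_eq_zero_iff _ p).mpr hdvd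
  have hB2 : (Nat.fib (α+1) : ZMod p) ^ 2 = 1 := by
    have hc := cassini α
    have := congrArg (fun z : ℤ => (z : ZMod p)) hc
    push_cast at this
    rw [hA] at this
    have hev : Even α := Nat.even_iff.mpr heven
    rw [hev.neg_one_pow] at this
    simpa using this
  have hstep : ∀ m, (Nat.fib (m + α) : ZMod p) = (Nat.fib m : ZMod p) * (Nat.fib (α+1) : ZMod p) := by
    intro m
    rcases Nat.eq_zero_or_pos m with rfl | hm
    · simpa using hA
    · obtain ⟨m', rfl⟩ := Nat.exists_eq_add_of_le hm
      rw [show 1 + m' + α = m' + α + 1 by omega, show 1 + m' = m' + 1 by omega, Nat.fib_add]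
      push_cast
      rw [hA]
      ring
  have h2 : ∀ n, (Nat.fib (n + 2*α) : ZMod p) = (Nat.fib n : ZMod p) := by
    intro n
    rw [show n + 2*α = (n + α) + α by ring, hstep (n+α), hstep n]
    rw [mul_assoc, ← sq, hB2, mul_one]
  apply Nat.sInf_le
  exact ⟨by omega, fun n => (ZMod.natCast_eq_natCast_iff _ _ _).mp (h2 n)⟩


theorem padicValNat_lucas_zero_eq_wall_exponent
    (p : ℕ) (hp : p.Prime) (hp2 : p ≠ 2) (hp3 : p ≠ 3) (hp5 : p ≠ 5)
    (i : ℕ) (hi : i < pisano p) (hL : p ∣ lucas i) :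
    padicValNat p (lucas i) = padicValNat p (Nat.fib (pSubEps p)) := by
  haveI : Fact p.Prime := ⟨hp⟩
  have hp7 : 7 ≤ p := by
    by_contra hlt
    push_neg at hlt
    have h2 := hp.two_le
    interval_cases p <;> simp_all (config := {decide := true})
  have hNpos : 0 < pSubEps p := by unfold pSubEps; split <;> omega
  have hdvdN : p ∣ Nat.fib (pSubEps p) := by
    unfold pSubEps
    split
    · rename_i h
      exact apparition_one p hp hp2 hp5 ((isSquare_five_iff p hp hp2 hp5).mpr h)
    · rename_i h
      exact apparition_two p hp hp2 hp5 (fun hs => h ((isSquare_five_iff p hp hp2 hp5).mp hs))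
  have hne : {n | 0 < n ∧ p ∣ Nat.fib n}.Nonempty := ⟨pSubEps p, hNpos, hdvdN⟩
  set α := fibRank p with hαdef
  obtain ⟨hαpos, hαdvd⟩ := fibRank_mem p hne
  have hBnd : ¬ p ∣ Nat.fib (α+1) := by
    intro h
    have hc := Nat.fib_coprime_fib_succ α
    have : p ∣ Nat.gcd (Nat.fib α) (Nat.fib (α+1)) := Nat.dvd_gcd hαdvd h
    rw [hc] at this
    have := Nat.le_of_dvd (by norm_num) this
    omega
  have hi1 : 1 ≤ i := by
    rcases Nat.eq_zero_or_pos i with rfl | h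
    · exfalso
      have h2 : lucas 0 = 2 := rfl
      rw [h2] at hL
      have := Nat.le_of_dvd (by norm_num) hL
      omega
    · exact h
  have h2i : p ∣ Nat.fib (2*i) := by
    rw [← fib_mul_lucas]
    exact Dvd.dvd.mul_left hL _
  have hα2i : α ∣ 2*i := fibRank_dvd p hne _ h2i
  have hαni : ¬ α ∣ i := by
    intro h
    have hpf : p ∣ Nat.fib i := dvd_fib_of_fibRank_dvd p hne _ h
    have hs : p ∣ 2 * Nat.fib (i+1) := by
      rw [← lucas_add_fib]
      exact Nat.dvd_add hL hpf
    have hpodd : ¬ p ∣ 2 := fun hd => by have := Nat.le_of_dvd (by norm_num) hd; omega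
    have hnext : p ∣ Nat.fib (i+1) :=
      (Nat.Coprime.dvd_of_dvd_mul_left (hp.coprime_iff_not_dvd.mpr hpodd) hs)
    have hc := Nat.fib_coprime_fib_succ i
    have : p ∣ Nat.gcd (Nat.fib i) (Nat.fib (i+1)) := Nat.dvd_gcd hpf hnext
    rw [hc] at this
    have := Nat.le_of_dvd (by norm_num) this
    omega
  have heven : α % 2 = 0 := by
    by_contra hodd
    apply hαni
    have hcop : Nat.Coprime α 2 := by
      have : ¬ 2 ∣ α := by omega
      exact Nat.coprime_comm.mp ((Nat.prime_two.coprime_iff_not_dvd).mpr this)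
    exact hcop.dvd_of_dvd_mul_left hα2i
  set β := α / 2 with hβdef
  have hβ : α = 2 * β := by omega
  have hβpos : 0 < β := by omega
  have hβi : β ∣ i := by
    have h2' : 2 * β ∣ 2 * i := by rw [← hβ]; exact hα2i
    exact (mul_dvd_mul_iff_left (by norm_num : (2:ℕ) ≠ 0)).mp h2'
  obtain ⟨k, hk⟩ := hβi
  have hkpos : 0 < k := by
    rcases Nat.eq_zero_or_pos k with rfl | h
    · omega
    · exact h
  have hkodd : ¬ 2 ∣ k := by
    intro ⟨m, hm⟩
    apply hαni
    exact ⟨m, by rw [hk, hm, hβ]; ring⟩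
  have h2ieq : 2*i = α * k := by rw [hk, hβ]; ring
  have hpis : pisano p ≤ 2*α := pisano_le_aux p α hαpos heven hαdvd
  have hklt : k < 4 := by
    have h4 : β * k < β * 4 := by
      calc β * k = i := hk.symm
      _ < pisano p := hi
      _ ≤ 2 * α := hpis
      _ = β * 4 := by rw [hβ]; ring
    exact Nat.lt_of_mul_lt_mul_left h4
  have hpk : ¬ p ∣ k := by
    intro h
    have := Nat.le_of_dvd hkpos h
    omega
  have h1 : padicValNat p (Nat.fib (α * k)) = padicValNat p (Nat.fib α) :=
    fib_val p hp α hαpos hαdvd hBnd k hkpos hpk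
  have h2 : padicValNat p (Nat.fib (pSubEps p)) = padicValNat p (Nat.fib α) := by
    obtain ⟨k', hk'⟩ := fibRank_dvd p hne _ hdvdN
    have hk'pos : 0 < k' := by
      rcases Nat.eq_zero_or_pos k' with rfl | h
      · rw [hk'] at hNpos; simp at hNpos
      · exact h
    have hpk' : ¬ p ∣ k' := by
      intro h
      have hpN : p ∣ pSubEps p := by
        rw [hk']
        exact Dvd.dvd.mul_left h _
      have hle := Nat.le_of_dvd hNpos hpN
      unfold pSubEps at hpN hle
      split at hpN
      · have := Nat.le_of_dvd (by omega) hpN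
        omega
      · have h1 : p ∣ 1 := (Nat.dvd_add_right (dvd_refl p)).mp hpN
        have := Nat.le_of_dvd (by norm_num) h1
        omega
    rw [hk']
    exact fib_val p hp α hαpos hαdvd hBnd k' hk'pos hpk'
  -- left side
  have hnfi : ¬ p ∣ Nat.fib i := fun h => hαni (fibRank_dvd p hne _ h)
  have hv0 : padicValNat p (Nat.fib i) = 0 := padicValNat.eq_zero_of_not_dvd hnfi
  have hfi : Nat.fib i ≠ 0 := (Nat.fib_pos.mpr hi1).ne'
  have hli : lucas i ≠ 0 := (lucas_pos i).ne'
  have hmulv : padicValNat p (Nat.fib (2*i))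
      = padicValNat p (Nat.fib i) + padicValNat p (lucas i) := by
    rw [← fib_mul_lucas]
    exact padicValNat.mul hfi hli
  have hL1 : padicValNat p (lucas i) = padicValNat p (Nat.fib α) := by
    rw [← h1, ← h2ieq]
    omega
  rw [hL1, h2]
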